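/- Let ι be a nonempty finite type, X a topological space, and for each i ∈ ι let π_i : S_i → X be a local homeomorphism. Then the projection π : S* → X of the Whitney sum, π(σ) = π_{i₀}(σ_{i₀}) for a fixed i₀ ∈ ι, is a local homeomorphism; hence the Whitney sum (S*, π) is a sheaf over X. -/

import Mathlib

/-- The projection of the Whitney sum of sheaves (local homeomorphisms) over `X` is a
local homeomorphism, hence the Whitney sum is a sheaf over `X`. -/
theorem whitneySum_isLocalHomeomorph {ι : Type*} [Finite ι] [Nonempty ι]
    {X : Type*} [TopologicalSpace X] {S : ι → Type*} [∀ i, TopologicalSpace (S i)]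
    (π : ∀ i, S i → X) (hπ : ∀ i, IsLocalHomeomorph (π i)) (i₀ : ι) :
    IsLocalHomeomorph
      (fun σ : {σ : ∀ i, S i // ∀ i j, π i (σ i) = π j (σ j)} =>
        π i₀ (σ.1 i₀)) := by
  classical
  apply IsLocalHomeomorph.mk
  intro σ
  -- choose charts for each component
  choose e hmem heq using fun i => hπ i (σ.1 i)
  -- the compatibility property of the candidate inverse
  set P : X → Prop := fun x => ∀ i j, π i ((e i).symm x) = π j ((e j).symm x) with hP
  have hPx : ∀ x ∈ ⋂ i, (e i).target, P x := by
    intro x hx i j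
    have hi : (e i).symm x ∈ (e i).source := (e i).map_target (Set.mem_iInter.mp hx i)
    have hj : (e j).symm x ∈ (e j).source := (e j).map_target (Set.mem_iInter.mp hx j)
    have h1 : π i ((e i).symm x) = x := by
      rw [heq i]; exact (e i).right_inv (Set.mem_iInter.mp hx i)
    have h2 : π j ((e j).symm x) = x := by
      rw [heq j]; exact (e j).right_inv (Set.mem_iInter.mp hx j)
    rw [h1, h2]
  refine ⟨{
    toFun := fun τ => π i₀ (τ.1 i₀)
    invFun := fun x => if h : P x then ⟨fun i => (e i).symm x, h⟩ else σ
    source := {τ | ∀ i, τ.1 i ∈ (e i).source}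
    target := ⋂ i, (e i).target
    map_source' := by
      intro τ hτ
      refine Set.mem_iInter.mpr fun i => ?_
      have h : π i₀ (τ.1 i₀) = π i (τ.1 i) := (τ.2 i₀ i)
      show π i₀ (τ.1 i₀) ∈ (e i).target
      rw [h, heq i]
      exact (e i).map_source (hτ i)
    map_target' := by
      intro x hx
      rw [dif_pos (hPx x hx)]
      intro i
      exact (e i).map_target (Set.mem_iInter.mp hx i)
    left_inv' := by
      intro τ hτ
      have hp : P (π i₀ (τ.1 i₀)) := hPx _ (by
        refine Set.mem_iInter.mpr fun i => ?_
        have : π i₀ (τ.1 i₀) = π i (τ.1 i) := (τ.2 i₀ i)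
        rw [this, heq i]
        exact (e i).map_source (hτ i))
      rw [dif_pos hp]
      apply Subtype.ext
      funext i
      have : π i₀ (τ.1 i₀) = π i (τ.1 i) := (τ.2 i₀ i)
      show (e i).symm (π i₀ (τ.1 i₀)) = τ.1 i
      rw [this, heq i]
      exact (e i).left_inv (hτ i)
    right_inv' := by
      intro x hx
      rw [dif_pos (hPx x hx)]
      show π i₀ ((e i₀).symm x) = x
      rw [heq i₀]
      exact (e i₀).right_inv (Set.mem_iInter.mp hx i₀)
    open_source := by
      have h : IsOpen (Subtype.val ⁻¹' Set.univ.pi (fun i => (e i).source) :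
          Set {σ : ∀ i, S i // ∀ i j, π i (σ i) = π j (σ j)}) :=
        (isOpen_set_pi Set.finite_univ fun i _ => (e i).open_source).preimage
          continuous_subtype_val
      convert h using 1
      ext τ; simp
    open_target := isOpen_iInter_of_finite fun i => (e i).open_target
    continuousOn_toFun := (((hπ i₀).continuous).comp
      ((continuous_apply i₀).comp continuous_subtype_val)).continuousOn
    continuousOn_invFun := by
      have hc : ContinuousOn (fun x => (fun i => (e i).symm x : ∀ i, S i))
          (⋂ i, (e i).target) := by
        apply continuousOn_pi.mpr
        intro i
        exact (e i).continuousOn_symm.mono (Set.iInter_subset _ i)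
      rw [continuousOn_iff_continuous_restrict]
      have key : (Set.domRestrict (⋂ i, (e i).target)
            (fun x => if h : P x then
              (⟨fun i => (e i).symm x, h⟩ : {σ : ∀ i, S i // ∀ i j, π i (σ i) = π j (σ j)})
            else σ))
          = fun x : ↥(⋂ i, (e i).target) =>
              (⟨fun i => (e i).symm x.1, hPx x.1 x.2⟩ :
                {σ : ∀ i, S i // ∀ i j, π i (σ i) = π j (σ j)}) := by
        funext x
        simp only [Set.domRestrict_apply, dif_pos (hPx x.1 x.2)]
      rw [key]
      apply Continuous.subtype_mk
      apply continuous_pi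
      intro i
      exact continuousOn_iff_continuous_restrict.mp
        (((e i).continuousOn_symm.mono (Set.iInter_subset _ i)).comp continuousOn_id
          (fun x hx => hx)) |>.comp continuous_id }, ?_, ?_⟩
  · exact fun i => hmem i
  · intro τ _
    rfl
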